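/- Fix ρ > r_e > 0, inclination φ ∈ (0,π), and distance d with ρ − r_e ≤ d ≤ √(ρ² − r_e²). Set c = (ρ² + r_e² − d²)/(2ρ r_e) and assume c < sin φ. Then the set of orbital angles ω ∈ [0,2π) for which √(ρ² − 2ρ r_e sin ω sin φ + r_e²) ≤ d is an arc whose total angular length is 2·arcsin(√(1 − c²/sin²φ)), so the corresponding arc of the circle of radius ρ has length 2ρ·arcsin(√(1 − (ρ²+r_e²−d²)²/(2ρ r_e sin φ)²)). -/
import Mathlib


open Real MeasureTheory
open scoped ENNReal

lemma sin_ge_arc (a : ℝ) (ha0 : 0 < a) (ha1 : a < 1) :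
    {ω ∈ Set.Ico (0 : ℝ) (2 * Real.pi) | a ≤ Real.sin ω}
      = Set.Icc (Real.arcsin a) (Real.pi - Real.arcsin a) := by
  have harc0 : 0 < Real.arcsin a := Real.arcsin_pos.2 ha0
  have harc2 : Real.arcsin a ≤ Real.pi / 2 := Real.arcsin_le_pi_div_two a
  ext ω
  simp only [Set.mem_setOf_eq, Set.mem_Ico, Set.mem_Icc]
  constructor
  · rintro ⟨⟨h0, h2⟩, hs⟩
    have hωπ : ω ≤ Real.pi := by
      by_contra h
      push_neg at h
      have : Real.sin ω ≤ 0 := by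
        have := Real.sin_nonneg_of_nonneg_of_le_pi (x := ω - Real.pi)
          (by linarith) (by linarith)
        have hsin : Real.sin (ω - Real.pi) = -Real.sin ω := by
          rw [Real.sin_sub, Real.sin_pi, Real.cos_pi]; ring
        linarith [hsin ▸ this]
      linarith
    constructor
    · rcases le_or_gt ω (Real.pi / 2) with hω | hω
      · have := Real.arcsin_sin (x := ω) (by linarith [Real.pi_pos]) hω
        calc Real.arcsin a ≤ Real.arcsin (Real.sin ω) := Real.monotone_arcsin hs
          _ = ω := this
      · linarith
    · rcases le_or_gt (Real.pi / 2) ω with hω | hω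
      · have hmem : Real.pi - ω ≤ Real.pi / 2 := by linarith
        have hmem' : -(Real.pi / 2) ≤ Real.pi - ω := by linarith
        have := Real.arcsin_sin hmem' hmem
        have hs' : a ≤ Real.sin (Real.pi - ω) := by rw [Real.sin_pi_sub]; exact hs
        have := Real.monotone_arcsin hs'
        rw [Real.arcsin_sin hmem' hmem] at this
        linarith
      · linarith
  · rintro ⟨h1, h2⟩
    have hπ : 0 < Real.pi := Real.pi_pos
    refine ⟨⟨by linarith, by linarith⟩, ?_⟩
    have ha1' : a ≤ 1 := le_of_lt ha1
    have ha1'' : -1 ≤ a := by linarith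
    rcases le_or_gt ω (Real.pi / 2) with hω | hω
    · have : Real.sin (Real.arcsin a) ≤ Real.sin ω := by
        apply Real.strictMonoOn_sin.monotoneOn
        · exact ⟨by linarith [Real.neg_pi_div_two_le_arcsin a], harc2⟩
        · exact ⟨by linarith, hω⟩
        · exact h1
      rwa [Real.sin_arcsin ha1'' ha1'] at this
    · have : Real.sin (Real.arcsin a) ≤ Real.sin (Real.pi - ω) := by
        apply Real.strictMonoOn_sin.monotoneOn
        · exact ⟨by linarith [Real.neg_pi_div_two_le_arcsin a], harc2⟩
        · exact ⟨by linarith, by linarith⟩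
        · linarith
      rw [Real.sin_arcsin ha1'' ha1', Real.sin_pi_sub] at this
      exact this

/-- For `ρ > r_e > 0`, `φ ∈ (0,π)`, `ρ − r_e ≤ d ≤ √(ρ²−r_e²)` and
`c = (ρ²+r_e²−d²)/(2ρ r_e) < sin φ`, the set of orbital angles `ω ∈ [0,2π)` at which
the satellite is within distance `d` of `u = (0,0,r_e)` has Lebesgue measure
`2 arcsin √(1 − c²/sin²φ)`; hence the arc of the orbit of radius `ρ` inside the
spherical cap `C(ρ,d)` has length
`2 ρ arcsin √(1 − ((ρ²+r_e²−d²)/(2ρ r_e sin φ))²)`. -/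
theorem arc_length_in_cap (ρ r_e d φ : ℝ) (hre : 0 < r_e) (hρ : r_e < ρ)
    (hφ : φ ∈ Set.Ioo (0 : ℝ) Real.pi)
    (hd₁ : ρ - r_e ≤ d) (hd₂ : d ≤ Real.sqrt (ρ ^ 2 - r_e ^ 2))
    (hc : (ρ ^ 2 + r_e ^ 2 - d ^ 2) / (2 * ρ * r_e) < Real.sin φ) :
    volume {ω ∈ Set.Ico (0 : ℝ) (2 * Real.pi) |
        Real.sqrt (ρ ^ 2 - 2 * ρ * r_e * Real.sin ω * Real.sin φ + r_e ^ 2) ≤ d}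
      = ENNReal.ofReal (2 * Real.arcsin (Real.sqrt
          (1 - ((ρ ^ 2 + r_e ^ 2 - d ^ 2) / (2 * ρ * r_e)) ^ 2 / Real.sin φ ^ 2)))
    ∧ ρ * (2 * Real.arcsin (Real.sqrt
          (1 - ((ρ ^ 2 + r_e ^ 2 - d ^ 2) / (2 * ρ * r_e)) ^ 2 / Real.sin φ ^ 2)))
      = 2 * ρ * Real.arcsin (Real.sqrt
          (1 - ((ρ ^ 2 + r_e ^ 2 - d ^ 2) / (2 * ρ * r_e * Real.sin φ)) ^ 2)) := by
  have hρ0 : 0 < ρ := hre.trans hρ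
  have hsφ : 0 < Real.sin φ := Real.sin_pos_of_pos_of_lt_pi hφ.1 hφ.2
  have h2ρr : 0 < 2 * ρ * r_e := by positivity
  set c : ℝ := (ρ ^ 2 + r_e ^ 2 - d ^ 2) / (2 * ρ * r_e) with hcdef
  set a : ℝ := c / Real.sin φ with hadef
  have hd0 : 0 < d := by linarith
  have hd2' : d ^ 2 ≤ ρ ^ 2 - r_e ^ 2 := by
    have h : 0 ≤ ρ ^ 2 - r_e ^ 2 := by nlinarith
    nlinarith [Real.sq_sqrt h, Real.sqrt_nonneg (ρ ^ 2 - r_e ^ 2)]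
  have hc0 : 0 < c := by
    rw [hcdef]
    apply div_pos _ h2ρr
    nlinarith
  have ha0 : 0 < a := div_pos hc0 hsφ
  have ha1 : a < 1 := by
    rw [hadef, div_lt_one hsφ]; exact hc
  have ha1' : a ≤ 1 := le_of_lt ha1
  have ha1'' : -1 ≤ a := by linarith
  -- rewrite the set
  have hset : {ω ∈ Set.Ico (0 : ℝ) (2 * Real.pi) |
        Real.sqrt (ρ ^ 2 - 2 * ρ * r_e * Real.sin ω * Real.sin φ + r_e ^ 2) ≤ d}
      = {ω ∈ Set.Ico (0 : ℝ) (2 * Real.pi) | a ≤ Real.sin ω} := by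
    ext ω
    simp only [Set.mem_setOf_eq, Set.mem_Ico]
    refine and_congr_right fun _ => ?_
    rw [Real.sqrt_le_iff]
    constructor
    · rintro ⟨_, h⟩
      rw [hadef, hcdef, div_div, div_le_iff₀ (by positivity)]
      nlinarith
    · intro h
      refine ⟨le_of_lt hd0, ?_⟩
      rw [hadef, hcdef, div_div, div_le_iff₀ (by positivity)] at h
      nlinarith
  have key : Real.pi - 2 * Real.arcsin a
      = 2 * Real.arcsin (Real.sqrt (1 - a ^ 2)) := by
    have h1 : Real.sqrt (1 - a ^ 2) = Real.sin (Real.pi / 2 - Real.arcsin a) := by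
      rw [Real.sin_pi_div_two_sub, Real.cos_arcsin]
    rw [h1, Real.arcsin_sin (by linarith [Real.arcsin_le_pi_div_two a, Real.pi_pos])
      (by linarith [Real.arcsin_pos.2 ha0])]
    ring
  have hsq : ((ρ ^ 2 + r_e ^ 2 - d ^ 2) / (2 * ρ * r_e)) ^ 2 / Real.sin φ ^ 2
      = a ^ 2 := by
    rw [hadef, hcdef]; ring
  constructor
  · rw [hset, sin_ge_arc a ha0 ha1, Real.volume_Icc, hsq, ← key]
    congr 1
    ring
  · rw [hsq]
    have : ((ρ ^ 2 + r_e ^ 2 - d ^ 2) / (2 * ρ * r_e * Real.sin φ)) ^ 2 = a ^ 2 := by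
      rw [hadef, hcdef]; ring
    rw [this]
    ring
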